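/- Suppose g satisfies g'' = -α g² + δ g + ξ and additionally 3 N g'' = 2α c √(g'²) for constants N, c with c ≠ 0 and α ≠ 0; if g' is not identically zero on any interval, then this leads to a contradiction unless α = N = 0. In particular, if α ≠ 0, no nonconstant solution g of g'' = -α g² + δ g + ξ satisfies 3 N g'' = 2α c |g'| with c > 0 on an open interval, for any constant N. -/

import Mathlib

/-- If `α ≠ 0`, `c > 0` and `g` solves `g'' = -α g² + δ g + ξ` on an open interval
with nonvanishing `g'`, then there is no constant `N` with `3 N g'' = 2 α c |g'|`
on that interval. -/
theorem no_compatible_constant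
    (α δ ξ c a b : ℝ) (hα : α ≠ 0) (hc : 0 < c) (hab : a < b)
    (g : ℝ → ℝ) (hg : ContDiffOn ℝ 2 g (Set.Ioo a b))
    (hg' : ∀ y ∈ Set.Ioo a b, deriv g y ≠ 0)
    (hode : ∀ y ∈ Set.Ioo a b,
      deriv (deriv g) y = -α * (g y)^2 + δ * g y + ξ) :
    ¬ ∃ N : ℝ, ∀ y ∈ Set.Ioo a b,
      3 * N * deriv (deriv g) y = 2 * α * c * |deriv g y| := by
  rintro ⟨N, hN⟩
  have hopen : IsOpen (Set.Ioo a b) := isOpen_Ioo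
  set m : ℝ := (a + b) / 2 with hm
  have hmem : m ∈ Set.Ioo a b := ⟨by linarith, by linarith⟩
  -- N ≠ 0
  have hNne : N ≠ 0 := by
    intro h
    have := hN m hmem
    rw [h] at this
    simp only [mul_zero, zero_mul] at this
    have habs : |deriv g m| ≠ 0 := abs_ne_zero.mpr (hg' m hmem)
    have h2 : 2 * α * c ≠ 0 := by positivity
    exact habs (by
      rcases mul_eq_zero.mp this.symm with h | h
      · exact absurd h h2
      · exact h)
  -- continuity of deriv g on Ioo
  have hgc : ContinuousOn (deriv g) (Set.Ioo a b) :=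
    hg.continuousOn_deriv_of_isOpen hopen (by norm_num)
  -- sign constancy
  have hsign : ∃ ε : ℝ, (ε = 1 ∨ ε = -1) ∧
      ∀ y ∈ Set.Ioo a b, |deriv g y| = ε * deriv g y := by
    rcases lt_or_gt_of_ne (hg' m hmem) with hneg | hpos
    · refine ⟨-1, Or.inr rfl, fun y hy => ?_⟩
      have hyneg : deriv g y < 0 := by
        by_contra hcon
        push_neg at hcon
        have hypos : 0 < deriv g y := lt_of_le_of_ne hcon (Ne.symm (hg' y hy))
        have hsub : Set.uIcc m y ⊆ Set.Ioo a b :=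
          Set.OrdConnected.uIcc_subset Set.ordConnected_Ioo hmem hy
        have := intermediate_value_uIcc (hgc.mono hsub)
        have h0 : (0 : ℝ) ∈ Set.uIcc (deriv g m) (deriv g y) :=
          Set.mem_uIcc.mpr (Or.inl ⟨le_of_lt hneg, le_of_lt hypos⟩)
        obtain ⟨z, hz, hz0⟩ := this h0
        exact hg' z (hsub hz) hz0
      rw [abs_of_neg hyneg]; ring
    · refine ⟨1, Or.inl rfl, fun y hy => ?_⟩
      have hypos : 0 < deriv g y := by
        by_contra hcon
        push_neg at hcon
        have hyneg : deriv g y < 0 := lt_of_le_of_ne hcon (hg' y hy)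
        have hsub : Set.uIcc m y ⊆ Set.Ioo a b :=
          Set.OrdConnected.uIcc_subset Set.ordConnected_Ioo hmem hy
        have := intermediate_value_uIcc (hgc.mono hsub)
        have h0 : (0 : ℝ) ∈ Set.uIcc (deriv g m) (deriv g y) :=
          Set.mem_uIcc.mpr (Or.inr ⟨le_of_lt hyneg, le_of_lt hpos⟩)
        obtain ⟨z, hz, hz0⟩ := this h0
        exact hg' z (hsub hz) hz0
      rw [abs_of_pos hypos, one_mul]
  obtain ⟨ε, hε, habs⟩ := hsign
  have hεne : ε ≠ 0 := by rcases hε with h | h <;> simp [h]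
  set lam : ℝ := 2 * α * c * ε / (3 * N) with hlam
  have hlamne : lam ≠ 0 := by
    apply div_ne_zero
    · have : (2:ℝ) * α * c ≠ 0 := by positivity
      exact mul_ne_zero this hεne
    · simpa using hNne
  -- g'' = lam * g' on Ioo
  have h1 : ∀ y ∈ Set.Ioo a b, deriv (deriv g) y = lam * deriv g y := by
    intro y hy
    have := hN y hy
    rw [habs y hy] at this
    rw [hlam, div_mul_eq_mul_div, eq_div_iff (by simpa using hNne)]
    linarith [this]
  -- differentiability facts
  have hgdiff : DifferentiableOn ℝ g (Set.Ioo a b) :=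
    hg.differentiableOn (by norm_num)
  have hg'diff : DifferentiableOn ℝ (deriv g) (Set.Ioo a b) :=
    (hg.deriv_of_isOpen (m := 1) hopen (by norm_num)).differentiableOn one_ne_zero
  -- key differentiation at each point
  have hkey : ∀ y ∈ Set.Ioo a b, -2 * α * g y + δ = lam ^ 2 := by
    intro y hy
    have hnhds : Set.Ioo a b ∈ nhds y := hopen.mem_nhds hy
    have hEq : (fun z => -α * (g z) ^ 2 + δ * g z + ξ) =ᶠ[nhds y]
        (fun z => lam * deriv g z) := by
      filter_upwards [hnhds] with z hz
      rw [← hode z hz, h1 z hz]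
    have hgy : DifferentiableAt ℝ g y :=
      (hgdiff.differentiableAt hnhds)
    have hg'y : DifferentiableAt ℝ (deriv g) y :=
      (hg'diff.differentiableAt hnhds)
    have hL : deriv (fun z => -α * (g z) ^ 2 + δ * g z + ξ) y
        = -α * (2 * g y * deriv g y) + δ * deriv g y := by
      have h2 : DifferentiableAt ℝ (fun z => (g z) ^ 2) y := hgy.pow 2
      have hd := (((hgy.hasDerivAt.pow 2).const_mul (-α)).add
        (hgy.hasDerivAt.const_mul δ)).add_const ξ
      refine hd.deriv.trans ?_
      norm_num
    have hR : deriv (fun z => lam * deriv g z) y = lam * (lam * deriv g y) := by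
      rw [deriv_const_mul _ hg'y, h1 y hy]
    have := hEq.deriv_eq
    rw [hL, hR] at this
    have hgy' := hg' y hy
    have : (-2 * α * g y + δ) * deriv g y = lam ^ 2 * deriv g y := by
      rw [pow_two]; linarith [this]
    exact mul_right_cancel₀ hgy' this
  -- g is constant on Ioo, so deriv g m = 0, contradiction
  have hconst : ∀ y ∈ Set.Ioo a b, g y = (δ - lam ^ 2) / (2 * α) := by
    intro y hy
    have := hkey y hy
    field_simp
    linarith [this]
  have hEqc : g =ᶠ[nhds m] (fun _ => (δ - lam ^ 2) / (2 * α)) := by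
    filter_upwards [hopen.mem_nhds hmem] with z hz using hconst z hz
  have : deriv g m = 0 := by
    rw [hEqc.deriv_eq, deriv_const]
  exact hg' m hmem this
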